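/- (Deterministic Cramér–Rao inequality) Let X be a finite set, Θ ⊆ ℝ^k open, and θ ↦ p_θ a continuously differentiable family of strictly positive probability distributions on X. Assume the Fisher information matrix G^{(e)}(θ), with entries g^{(e)}_{ij}(θ) := E_{p_θ}[∂_i log p_θ(X) ∂_j log p_θ(X)], is positive definite. If θ̂ : X → ℝ^k is an unbiased estimator of θ, i.e. E_{p_θ}[θ̂] = θ for all θ ∈ Θ, then Cov_{p_θ}[θ̂] ≽ (G^{(e)}(θ))^{-1} for every θ ∈ Θ. -/

import Mathlib

open scoped BigOperators Topology Matrix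
open Real MeasureTheory

noncomputable section

/-- Expectation of `A` under the weight/distribution `p` on a finite set. -/
def expct {X : Type*} [Fintype X] (p A : X → ℝ) : ℝ := ∑ x, p x * A x

/-- Covariance of `A` and `B` under `p`. -/
def covf {X : Type*} [Fintype X] (p A B : X → ℝ) : ℝ :=
  (∑ x, p x * A x * B x) - (∑ x, p x * A x) * (∑ x, p x * B x)

/-- Variance of `A` under `p`: `E_p[(A - E_p A)^2]`. -/
def varE {X : Type*} [Fintype X] (p A : X → ℝ) : ℝ :=
  ∑ x, p x * (A x - expct p A) ^ 2

/-- The α-escort distribution of `p`. -/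
def escort {X : Type*} [Fintype X] (α : ℝ) (p : X → ℝ) : X → ℝ :=
  fun x => p x ^ α / ∑ y, p y ^ α

/-- Partial derivative in the `i`-th coordinate direction. -/
def pderiv {m : ℕ} (i : Fin m) (f : (Fin m → ℝ) → ℝ) (θ : Fin m → ℝ) : ℝ :=
  fderiv ℝ f θ (Pi.single i 1)

/-- Covariance matrix of a vector-valued map `A` under `p`. -/
def covMatrix {X : Type*} [Fintype X] {m : ℕ} (p : X → ℝ) (A : X → Fin m → ℝ) :
    Matrix (Fin m) (Fin m) ℝ :=
  Matrix.of fun i j => covf p (fun x => A x i) (fun x => A x j)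

/-- The α-information matrix `G^{(α)}(θ)`. -/
def Galpha {X : Type*} [Fintype X] {m : ℕ} (α : ℝ) (p : (Fin m → ℝ) → X → ℝ)
    (θ : Fin m → ℝ) : Matrix (Fin m) (Fin m) ℝ :=
  Matrix.of fun i j =>
    covf (escort α (p θ)) (fun x => pderiv i (fun t => Real.log (p t x)) θ)
      (fun x => pderiv j (fun t => Real.log (p t x)) θ)

/-- The I_α-divergence (relative α-entropy). -/
def Ialpha {X : Type*} [Fintype X] (α : ℝ) (p q : X → ℝ) : ℝ :=
  (1 / (1 - α)) * Real.log (∑ x, p x * q x ^ (α - 1))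
    + (1 / α) * Real.log (∑ x, q x ^ α)
    - (1 / (α * (1 - α))) * Real.log (∑ x, p x ^ α)

/-- Generalized KL-divergence between positive measures on a finite set. -/
def genKL {X : Type*} [Fintype X] (pt qt : X → ℝ) : ℝ :=
  ∑ x, pt x * Real.log (pt x / qt x) - ∑ x, pt x + ∑ x, qt x

/-- The Fisher information matrix `G^{(e)}(θ)`. -/
def GeMat {X : Type*} [Fintype X] {k : ℕ} (p : (Fin k → ℝ) → X → ℝ) (θ : Fin k → ℝ) :
    Matrix (Fin k) (Fin k) ℝ :=
  Matrix.of fun i j =>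
    ∑ x, p θ x * pderiv i (fun t => Real.log (p t x)) θ * pderiv j (fun t => Real.log (p t x)) θ

/-- The prior matrix `J^λ(θ)` with entries `∂_i log λ · ∂_j log λ`. -/
def Jmat {k : ℕ} (lam : (Fin k → ℝ) → ℝ) (θ : Fin k → ℝ) : Matrix (Fin k) (Fin k) ℝ :=
  Matrix.of fun i j =>
    pderiv i (fun t => Real.log (lam t)) θ * pderiv j (fun t => Real.log (lam t)) θ

/-- The generalized Fisher matrix `G^{(f,F)}(θ)` of the escort model. -/
def GFF {X : Type*} [Fintype X] {k : ℕ} (F : ℝ → ℝ) (p : (Fin k → ℝ) → X → ℝ)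
    (θ : Fin k → ℝ) : Matrix (Fin k) (Fin k) ℝ :=
  Matrix.of fun i j =>
    ∑ x, F (p θ x) * pderiv i (fun t => Real.log (F (p t x))) θ
      * pderiv j (fun t => Real.log (F (p t x))) θ

/-- The generalized f-divergence `D_f^{(F)}(p,q)`. -/
def genDiv {X : Type*} [Fintype X] (f F : ℝ → ℝ) (p q : X → ℝ) : ℝ :=
  (1 / deriv (deriv f) 1) * ∑ x, F (q x) * f (F (p x) / F (q x))

/-- The Bayesian I_α-divergence between `λ·p` and `μ·q`. -/
def IalphaB {X : Type*} [Fintype X] (α lam mu : ℝ) (p q : X → ℝ) : ℝ :=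
  lam * Ialpha α p q + lam * Real.log (lam / mu) - lam + mu

/-- The open-simplex parametrization of distributions on a set with `d+1` points. -/
def simplexFam (d : ℕ) (θ : Fin d → ℝ) : Fin (d + 1) → ℝ :=
  fun x => if h : (x : ℕ) < d then θ ⟨x, h⟩ else 1 - ∑ i, θ i

lemma bilin' {X : Type*} [Fintype X] {k : ℕ} (P : X → ℝ) (f g : X → Fin k → ℝ)
    (c d : Fin k → ℝ) :
    ∑ x, P x * (∑ i, c i * f x i) * (∑ j, d j * g x j)
      = ∑ i, ∑ j, c i * d j * ∑ x, P x * f x i * g x j := by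
  have h : ∀ x, P x * (∑ i, c i * f x i) * (∑ j, d j * g x j)
      = ∑ i, ∑ j, c i * d j * (P x * f x i * g x j) := by
    intro x
    rw [mul_assoc, Finset.sum_mul_sum, Finset.mul_sum]
    exact Finset.sum_congr rfl fun i _ => by
      rw [Finset.mul_sum]
      exact Finset.sum_congr rfl fun j _ => by ring
  simp_rw [h, Finset.mul_sum]
  rw [Finset.sum_comm]
  exact Finset.sum_congr rfl fun i _ => by rw [Finset.sum_comm]


/-- the deterministic Cramér–Rao inequality. -/
theorem deterministic_cramer_rao {X : Type*} [Fintype X] {k : ℕ}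
    (Θ : Set (Fin k → ℝ)) (hΘ : IsOpen Θ)
    (p : (Fin k → ℝ) → X → ℝ)
    (hsmooth : ∀ x, ContDiffOn ℝ 1 (fun θ => p θ x) Θ)
    (hpos : ∀ θ ∈ Θ, ∀ x, 0 < p θ x)
    (hsum : ∀ θ ∈ Θ, ∑ x, p θ x = 1)
    (hPD : ∀ θ ∈ Θ, (GeMat p θ).PosDef)
    (est : X → Fin k → ℝ)
    (hunb : ∀ θ ∈ Θ, ∀ i, expct (p θ) (fun x => est x i) = θ i) :
    ∀ θ ∈ Θ, (covMatrix (p θ) est - (GeMat p θ)⁻¹).PosSemidef := by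
  intro θ hθ
  have hθn : Θ ∈ 𝓝 θ := hΘ.mem_nhds hθ
  have hdiff : ∀ x, DifferentiableAt ℝ (fun t => p t x) θ := fun x =>
    ((hsmooth x).contDiffAt hθn).differentiableAt one_ne_zero
  set D : Fin k → X → ℝ := fun i x => fderiv ℝ (fun t => p t x) θ (Pi.single i 1) with hDdef
  have hunb' : ∀ i, ∑ x, p θ x * est x i = θ i := fun i => hunb θ hθ i
  -- score rewriting
  have hs : ∀ i x, pderiv i (fun t => Real.log (p t x)) θ = (p θ x)⁻¹ * D i x := by
    intro i x
    have h1 : HasFDerivAt (fun t => Real.log (p t x))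
        ((p θ x)⁻¹ • fderiv ℝ (fun t => p t x) θ) θ :=
      (hdiff x).hasFDerivAt.log (ne_of_gt (hpos θ hθ x))
    simp only [pderiv, h1.fderiv, ContinuousLinearMap.smul_apply, smul_eq_mul, hDdef]
  -- sum of derivatives is zero
  have hDsum : ∀ i, ∑ x, D i x = 0 := by
    intro i
    have heq : (fun t => ∑ x, p t x) =ᶠ[𝓝 θ] (fun _ => (1:ℝ)) :=
      Filter.eventuallyEq_of_mem hθn (fun t ht => hsum t ht)
    have h1 : fderiv ℝ (fun t => ∑ x, p t x) θ = 0 := by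
      rw [heq.fderiv_eq, fderiv_const_apply]
    have h2 : fderiv ℝ (fun t => ∑ x, p t x) θ = ∑ x, fderiv ℝ (fun t => p t x) θ :=
      fderiv_fun_sum (fun x _ => hdiff x)
    have h3 := h2.symm.trans h1
    calc ∑ x, D i x = (∑ x, fderiv ℝ (fun t => p t x) θ) (Pi.single i 1) := by
          simp [hDdef, ContinuousLinearMap.sum_apply]
      _ = 0 := by rw [h3]; rfl
  -- derivative of unbiasedness
  have hDest : ∀ i j, ∑ x, D i x * est x j = if j = i then 1 else 0 := by
    intro i j
    have heq : (fun t => ∑ x, p t x * est x j) =ᶠ[𝓝 θ] (fun t => t j) :=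
      Filter.eventuallyEq_of_mem hθn (fun t ht => by
        simpa [expct, mul_comm] using hunb t ht j)
    have h1 : fderiv ℝ (fun t : Fin k → ℝ => t j) θ
        = ContinuousLinearMap.proj (R := ℝ) (φ := fun _ : Fin k => ℝ) j :=
      (ContinuousLinearMap.proj (R := ℝ) (φ := fun _ : Fin k => ℝ) j).fderiv
    have h2 : fderiv ℝ (fun t => ∑ x, p t x * est x j) θ
        = ∑ x, (est x j) • fderiv ℝ (fun t => p t x) θ := by
      rw [fderiv_fun_sum (u := Finset.univ) (A := fun x t => p t x * est x j)
        (fun x _ => (hdiff x).mul_const _)]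
      exact Finset.sum_congr rfl fun x _ => by
        rw [fderiv_mul_const (hdiff x)]
    calc ∑ x, D i x * est x j
        = (∑ x, (est x j) • fderiv ℝ (fun t => p t x) θ) (Pi.single i 1) := by
          simp [hDdef, ContinuousLinearMap.sum_apply, mul_comm]
      _ = fderiv ℝ (fun t : Fin k → ℝ => t j) θ (Pi.single i 1) := by
          rw [← h2, heq.fderiv_eq]
      _ = if j = i then 1 else 0 := by rw [h1]; simp [Pi.single_apply]
  -- matrix facts
  have hG : (GeMat p θ).PosDef := hPD θ hθ
  have hGunit : IsUnit (GeMat p θ).det := isUnit_iff_ne_zero.mpr hG.det_pos.ne'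
  have hCherm : (covMatrix (p θ) est).IsHermitian := by
    ext i j
    simp only [Matrix.conjTranspose_apply, covMatrix, Matrix.of_apply, star_trivial, covf]
    have h1 : ∑ x, p θ x * est x j * est x i = ∑ x, p θ x * est x i * est x j :=
      Finset.sum_congr rfl fun x _ => by ring
    rw [h1, mul_comm]
  have hGinvherm : ((GeMat p θ)⁻¹).IsHermitian := hG.inv.1
  refine Matrix.posSemidef_iff_dotProduct_mulVec.mpr ⟨hCherm.sub hGinvherm, fun v => ?_⟩
  have hstar : star v = v := rfl
  rw [hstar]
  set w : Fin k → ℝ := (GeMat p θ)⁻¹ *ᵥ v with hwdef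
  set sc : X → Fin k → ℝ := fun x i => (p θ x)⁻¹ * D i x with hscdef
  -- inner sums
  have hC : ∀ i j, ∑ x, p θ x * (est x i - θ i) * (est x j - θ j)
      = covMatrix (p θ) est i j := by
    intro i j
    simp only [covMatrix, Matrix.of_apply, covf]
    have h : ∀ x, p θ x * (est x i - θ i) * (est x j - θ j)
        = p θ x * est x i * est x j - θ j * (p θ x * est x i)
          - θ i * (p θ x * est x j) + θ i * θ j * p θ x := fun x => by ring
    rw [Finset.sum_congr rfl fun x _ => h x]
    rw [Finset.sum_add_distrib, Finset.sum_sub_distrib, Finset.sum_sub_distrib,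
      ← Finset.mul_sum, ← Finset.mul_sum, ← Finset.mul_sum]
    rw [hsum θ hθ, hunb' i, hunb' j]
    ring
  have hB : ∀ i j, ∑ x, p θ x * (est x i - θ i) * sc x j = if j = i then 1 else 0 := by
    intro i j
    have h : ∀ x, p θ x * (est x i - θ i) * sc x j = D j x * est x i - θ i * D j x := by
      intro x
      have hne : p θ x ≠ 0 := (hpos θ hθ x).ne'
      simp only [hscdef]
      field_simp
    rw [Finset.sum_congr rfl fun x _ => h x, Finset.sum_sub_distrib, ← Finset.mul_sum,
      hDsum j, hDest j i]
    simp [eq_comm]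
  have hGij : ∀ i j, ∑ x, p θ x * sc x i * sc x j = GeMat p θ i j := by
    intro i j
    simp only [GeMat, Matrix.of_apply, hs, hscdef]
  -- quadratic form expansion
  set a : X → ℝ := fun x => ∑ i, v i * (est x i - θ i) with hadef
  set b : X → ℝ := fun x => ∑ i, w i * sc x i with hbdef
  have hSnn : 0 ≤ ∑ x, p θ x * (a x - b x) ^ 2 :=
    Finset.sum_nonneg fun x _ => mul_nonneg (hpos θ hθ x).le (sq_nonneg _)
  have hpt : ∀ x, p θ x * (a x - b x) ^ 2
      = p θ x * a x * a x - 2 * (p θ x * a x * b x) + p θ x * b x * b x := fun x => by ring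
  have hT1 : ∑ x, p θ x * a x * a x
      = ∑ i, ∑ j, v i * v j * covMatrix (p θ) est i j := by
    rw [hadef]
    rw [bilin' (p θ) (fun x i => est x i - θ i) (fun x i => est x i - θ i) v v]
    exact Finset.sum_congr rfl fun i _ => Finset.sum_congr rfl fun j _ => by rw [hC i j]
  have hT2 : ∑ x, p θ x * a x * b x = ∑ i, v i * w i := by
    rw [hadef, hbdef]
    rw [bilin' (p θ) (fun x i => est x i - θ i) sc v w]
    have h : ∀ i, ∑ j, v i * w j * ∑ x, p θ x * (est x i - θ i) * sc x j = v i * w i := by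
      intro i
      rw [Finset.sum_congr rfl fun j _ => by rw [hB i j]]
      simp only [mul_ite, mul_one, mul_zero]
      rw [Finset.sum_ite_eq' Finset.univ i (fun j => v i * w j)]
      simp
    exact Finset.sum_congr rfl fun i _ => h i
  have hT3 : ∑ x, p θ x * b x * b x = ∑ i, ∑ j, w i * w j * GeMat p θ i j := by
    rw [hbdef]
    rw [bilin' (p θ) sc sc w w]
    exact Finset.sum_congr rfl fun i _ => Finset.sum_congr rfl fun j _ => by rw [hGij i j]
  have hexp : ∑ x, p θ x * (a x - b x) ^ 2
      = (∑ i, ∑ j, v i * v j * covMatrix (p θ) est i j) - 2 * (∑ i, v i * w i)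
        + (∑ i, ∑ j, w i * w j * GeMat p θ i j) := by
    rw [Finset.sum_congr rfl fun x _ => hpt x]
    rw [Finset.sum_add_distrib, Finset.sum_sub_distrib, ← Finset.mul_sum, hT1, hT2, hT3]
  -- matrix reformulations
  have hquad1 : ∑ i, ∑ j, v i * v j * covMatrix (p θ) est i j
      = v ⬝ᵥ (covMatrix (p θ) est *ᵥ v) := by
    simp only [dotProduct, Matrix.mulVec, Finset.mul_sum]
    exact Finset.sum_congr rfl fun i _ => Finset.sum_congr rfl fun j _ => by
      ring
  have hquad2 : ∑ i, ∑ j, w i * w j * GeMat p θ i j = w ⬝ᵥ (GeMat p θ *ᵥ w) := by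
    simp only [dotProduct, Matrix.mulVec, Finset.mul_sum]
    exact Finset.sum_congr rfl fun i _ => Finset.sum_congr rfl fun j _ => by
      ring
  have hGw : GeMat p θ *ᵥ w = v := by
    rw [hwdef, Matrix.mulVec_mulVec, Matrix.mul_nonsing_inv _ hGunit, Matrix.one_mulVec]
  have hvw : ∑ i, v i * w i = v ⬝ᵥ ((GeMat p θ)⁻¹ *ᵥ v) := rfl
  have hwv : w ⬝ᵥ v = ∑ i, v i * w i := by
    rw [dotProduct_comm]; rfl
  rw [Matrix.sub_mulVec, dotProduct_sub]
  have hfin := hSnn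
  rw [hexp, hquad1, hquad2, hGw, hwv] at hfin
  rw [← hvw]
  linarith
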